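/- Kahane–Khintchine averaging estimate for averages: let K be a dyadic cube, k ≥ 0, and for each i in a finite index set let φ_i be a nonnegative locally integrable function. Then Σ_{I : I^{(k)}=K} |K|^{-1} (Σ_i |I|² ⟨φ_i⟩_I²)^{1/2} ≲ ⟨ (Σ_i φ_i²)^{1/2} ⟩_K, with implicit constant independent of K, k, and the φ_i. (Here the sum is over all dyadic cubes I whose k-th ancestor is K.) -/

import Mathlib

open MeasureTheory Set Filter Topology
open scoped ENNReal NNReal BigOperators Classical

noncomputable section

/-- A dyadic cube in `ℝ^n`, given by a scale and an integer position. Its side length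
is `2^(-scale)`. -/
structure DyadicCube (n : ℕ) where
  scale : ℤ
  pos : Fin n → ℤ
deriving DecidableEq

namespace DyadicCube
variable {n : ℕ}
instance : Inhabited (DyadicCube n) := ⟨⟨0, fun _ => 0⟩⟩
/-- Side length. -/
def len (Q : DyadicCube n) : ℝ := (2 : ℝ) ^ (-Q.scale)
/-- The underlying half-open cube. -/
def carrier (Q : DyadicCube n) : Set (Fin n → ℝ) :=
  {x | ∀ i, (Q.pos i : ℝ) * Q.len ≤ x i ∧ x i < ((Q.pos i : ℝ) + 1) * Q.len}
/-- The dyadic child selected by `ε`. -/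
def child (Q : DyadicCube n) (ε : Fin n → Bool) : DyadicCube n :=
  ⟨Q.scale + 1, fun i => 2 * Q.pos i + (if ε i then 1 else 0)⟩
/-- The `k`-th dyadic ancestor. -/
def ancestor (k : ℕ) (Q : DyadicCube n) : DyadicCube n :=
  ⟨Q.scale - k, fun i => Int.fdiv (Q.pos i) (2 ^ k)⟩
end DyadicCube

/-- A general axis-parallel cube in `ℝ^n`. -/
structure Cube (n : ℕ) where
  corner : Fin n → ℝ
  side : ℝ
  side_pos : 0 < side

def Cube.carrier {n : ℕ} (Q : Cube n) : Set (Fin n → ℝ) :=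
  {x | ∀ i, Q.corner i ≤ x i ∧ x i < Q.corner i + Q.side}

/-- Average of `f` over a dyadic cube. -/
def cubeAvg {n : ℕ} (f : (Fin n → ℝ) → ℝ) (Q : DyadicCube n) : ℝ :=
  (volume Q.carrier).toReal⁻¹ * ∫ x in Q.carrier, f x

/-- The martingale difference `Δ_Q f = Σ_{Q' ∈ ch(Q)} (⟨f⟩_{Q'} − ⟨f⟩_Q) 1_{Q'}`. -/
def mdiff {n : ℕ} (f : (Fin n → ℝ) → ℝ) (Q : DyadicCube n) (x : Fin n → ℝ) : ℝ :=
  ∑ ε : Fin n → Bool,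
    Set.indicator (Q.child ε).carrier (fun _ => cubeAvg f (Q.child ε) - cubeAvg f Q) x

/-- One-dimensional Haar function on the dyadic interval of scale `k`, position `m`;
`b = false` gives the non-cancellative `h^0`, `b = true` the cancellative `h^1`. -/
def haar1 (k : ℤ) (m : ℤ) (b : Bool) (t : ℝ) : ℝ :=
  let len : ℝ := (2 : ℝ) ^ (-k)
  let lo : ℝ := (m : ℝ) * len
  Real.sqrt len⁻¹ *
    (if b then
        (if lo ≤ t ∧ t < lo + len / 2 then 1
         else if lo + len / 2 ≤ t ∧ t < lo + len then -1 else 0)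
      else (if lo ≤ t ∧ t < lo + len then 1 else 0))

/-- Tensor-product Haar function of signature `η` on a dyadic cube. -/
def haarCube {n : ℕ} (Q : DyadicCube n) (η : Fin n → Bool) (x : Fin n → ℝ) : ℝ :=
  ∏ i, haar1 Q.scale (Q.pos i) (η i) (x i)

/-- The nonzero (cancellative) Haar signatures. -/
def sigSet (n : ℕ) : Finset (Fin n → Bool) :=
  Finset.univ.filter fun η => η ≠ (fun _ => false)

/-- `ℝ≥0∞`-valued average over a set. -/
def setAvgE {α : Type*} [MeasureSpace α] (g : α → ℝ≥0∞) (s : Set α) : ℝ≥0∞ :=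
  (volume s)⁻¹ * ∫⁻ x in s, g x

/-- One-parameter `A_p` constant over general cubes. -/
def apConst {n : ℕ} (w : (Fin n → ℝ) → ℝ≥0∞) (p : ℝ) : ℝ≥0∞ :=
  ⨆ Q : Cube n, setAvgE w Q.carrier *
    (setAvgE (fun x => w x ^ (1 - p / (p - 1))) Q.carrier) ^ (p - 1)

/-- One-parameter `A_p` constant over dyadic cubes. -/
def apConstD {n : ℕ} (w : (Fin n → ℝ) → ℝ≥0∞) (p : ℝ) : ℝ≥0∞ :=
  ⨆ Q : DyadicCube n, setAvgE w Q.carrier *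
    (setAvgE (fun x => w x ^ (1 - p / (p - 1))) Q.carrier) ^ (p - 1)

/-- Bi-parameter `A_p` constant over rectangles `Q₁ × Q₂` of general cubes. -/
def apConst2 {n₁ n₂ : ℕ} (w : (Fin n₁ → ℝ) × (Fin n₂ → ℝ) → ℝ≥0∞) (p : ℝ) : ℝ≥0∞ :=
  ⨆ (Q₁ : Cube n₁) (Q₂ : Cube n₂),
    setAvgE w (Q₁.carrier ×ˢ Q₂.carrier) *
      (setAvgE (fun x => w x ^ (1 - p / (p - 1))) (Q₁.carrier ×ˢ Q₂.carrier)) ^ (p - 1)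

/-- Average over a dyadic rectangle in a bi-parameter space. -/
def rectAvg {n₁ n₂ : ℕ} (f : (Fin n₁ → ℝ) × (Fin n₂ → ℝ) → ℝ)
    (Q₁ : DyadicCube n₁) (Q₂ : DyadicCube n₂) : ℝ :=
  (volume (Q₁.carrier ×ˢ Q₂.carrier)).toReal⁻¹ * ∫ x in Q₁.carrier ×ˢ Q₂.carrier, f x

/-- Martingale difference acting in the first variable only. -/
def mdiff1 {n₁ n₂ : ℕ} (f : (Fin n₁ → ℝ) × (Fin n₂ → ℝ) → ℝ) (P : DyadicCube n₁)
    (x : (Fin n₁ → ℝ) × (Fin n₂ → ℝ)) : ℝ := mdiff (fun y => f (y, x.2)) P x.1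

/-- Martingale difference acting in the second variable only. -/
def mdiff2 {n₁ n₂ : ℕ} (f : (Fin n₁ → ℝ) × (Fin n₂ → ℝ) → ℝ) (P : DyadicCube n₂)
    (x : (Fin n₁ → ℝ) × (Fin n₂ → ℝ)) : ℝ := mdiff (fun y => f (x.1, y)) P x.2

/-- One-parameter (dyadic) maximal function in the first variable. -/
def M1E {n₁ n₂ : ℕ} (f : (Fin n₁ → ℝ) × (Fin n₂ → ℝ) → ℝ)
    (x : (Fin n₁ → ℝ) × (Fin n₂ → ℝ)) : ℝ≥0∞ :=
  ⨆ (Q : DyadicCube n₁) (_ : x.1 ∈ Q.carrier),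
    setAvgE (fun y => (‖f (y, x.2)‖₊ : ℝ≥0∞)) Q.carrier

/-- One-parameter (dyadic) maximal function in the second variable, acting on an
`ℝ≥0∞`-valued function. -/
def M2E {n₁ n₂ : ℕ} (F : (Fin n₁ → ℝ) × (Fin n₂ → ℝ) → ℝ≥0∞)
    (x : (Fin n₁ → ℝ) × (Fin n₂ → ℝ)) : ℝ≥0∞ :=
  ⨆ (Q : DyadicCube n₂) (_ : x.2 ∈ Q.carrier),
    (volume Q.carrier)⁻¹ * ∫⁻ y in Q.carrier, F (x.1, y)

/-- The strong (bi-parameter) dyadic maximal function. -/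
def Mstrong {n₁ n₂ : ℕ} (f : (Fin n₁ → ℝ) × (Fin n₂ → ℝ) → ℝ)
    (x : (Fin n₁ → ℝ) × (Fin n₂ → ℝ)) : ℝ≥0∞ :=
  ⨆ (Q₁ : DyadicCube n₁) (Q₂ : DyadicCube n₂)
    (_ : x.1 ∈ Q₁.carrier) (_ : x.2 ∈ Q₂.carrier),
      setAvgE (fun y => (‖f y‖₊ : ℝ≥0∞)) (Q₁.carrier ×ˢ Q₂.carrier)

/-- One-parameter square function in the first variable of a bi-parameter function. -/
def Sq1 {n₁ n₂ : ℕ} (f : (Fin n₁ → ℝ) × (Fin n₂ → ℝ) → ℝ)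
    (x : (Fin n₁ → ℝ) × (Fin n₂ → ℝ)) : ℝ :=
  Real.sqrt (∑' I₁ : DyadicCube n₁, (mdiff1 f I₁ x) ^ 2)

/-- Bi-parameter square function. -/
def Sq12 {n₁ n₂ : ℕ} (f : (Fin n₁ → ℝ) × (Fin n₂ → ℝ) → ℝ)
    (x : (Fin n₁ → ℝ) × (Fin n₂ → ℝ)) : ℝ :=
  Real.sqrt (∑' I₁ : DyadicCube n₁, ∑' I₂ : DyadicCube n₂,
    (mdiff1 (fun z => mdiff2 f I₂ z) I₁ x) ^ 2)

/-- Bi-parameter `A_∞`: uniform slicewise dyadic `A_p` for some `p`. -/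
def IsAinfty2 {n₁ n₂ : ℕ} (w : (Fin n₁ → ℝ) × (Fin n₂ → ℝ) → ℝ≥0∞) : Prop :=
  ∃ p : ℝ, 1 < p ∧ ∃ N : ℝ≥0∞, N ≠ ⊤ ∧
    (∀ᵐ x₂ : Fin n₂ → ℝ, apConstD (fun x₁ => w (x₁, x₂)) p ≤ N) ∧
    (∀ᵐ x₁ : Fin n₁ → ℝ, apConstD (fun x₂ => w (x₁, x₂)) p ≤ N)

/-- Nice functions: measurable, bounded, compactly supported. -/
def Nice {α : Type*} [TopologicalSpace α] [MeasurableSpace α] (f : α → ℝ) : Prop :=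
  Measurable f ∧ HasCompactSupport f ∧ ∃ C, ∀ x, |f x| ≤ C

/-! ### Multi-parameter machinery on `∏_i ℝ^{d i}` -/

abbrev Pd {m : ℕ} (d : Fin m → ℕ) : Type := ∀ i, Fin (d i) → ℝ

section Multi
variable {m : ℕ} {d : Fin m → ℕ}

/-- Average in the `i`-th parameter only. -/
def sliceAvg (f : Pd d → ℝ) (i : Fin m) (Q : DyadicCube (d i)) (x : Pd d) : ℝ :=
  (volume Q.carrier).toReal⁻¹ * ∫ y in Q.carrier, f (Function.update x i y)

/-- Martingale difference in the `i`-th parameter only. -/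
def pDiff (f : Pd d → ℝ) (i : Fin m) (Q : DyadicCube (d i)) (x : Pd d) : ℝ :=
  ∑ ε : Fin (d i) → Bool,
    Set.indicator (Q.child ε).carrier
      (fun _ => sliceAvg f i (Q.child ε) x - sliceAvg f i Q x) (x i)

/-- Iterated martingale difference in the parameters listed in `S`. -/
def mDiffL (f : Pd d → ℝ) : List (Fin m) → (∀ i, DyadicCube (d i)) → Pd d → ℝ
  | [], _, x => f x
  | i :: t, R, x => pDiff (fun y => mDiffL f t R y) i (R i) x

/-- Extend a family of cubes indexed by `S` to all parameters (by a default cube). -/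
def extendC (S : List (Fin m)) (R : ∀ i : {i // i ∈ S}, DyadicCube (d i.1)) :
    ∀ i, DyadicCube (d i) := fun i => if h : i ∈ S then R ⟨i, h⟩ else default

/-- Multi-parameter dyadic square function in the parameters of `S`. -/
def SqL (f : Pd d → ℝ) (S : List (Fin m)) (x : Pd d) : ℝ :=
  Real.sqrt (∑' R : ∀ i : {i // i ∈ S}, DyadicCube (d i.1),
    (mDiffL f S (extendC S R) x) ^ 2)

/-- Iterated slice integral (`ℝ≥0∞`-valued) over the cubes `R i`, `i ∈ S`. -/
def sliceIntE (g : Pd d → ℝ≥0∞) : List (Fin m) → (∀ i, DyadicCube (d i)) → Pd d → ℝ≥0∞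
  | [], _, x => g x
  | i :: t, R, x =>
      (volume (R i).carrier)⁻¹ * ∫⁻ y in (R i).carrier, sliceIntE g t R (Function.update x i y)

/-- Strong dyadic maximal function in the parameters of `S`. -/
def maxS (g : Pd d → ℝ) (S : List (Fin m)) (x : Pd d) : ℝ≥0∞ :=
  ⨆ (R : ∀ i, DyadicCube (d i)) (_ : ∀ i ∈ S, x i ∈ (R i).carrier),
    sliceIntE (fun y => (‖g y‖₊ : ℝ≥0∞)) S R x

/-- Partial Haar pairing in the parameters of `S`: integrate against the Haar functions
`h_{R i}^{η i}` in those variables. -/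
def pairHaarL (f : Pd d → ℝ) : List (Fin m) → (∀ i, DyadicCube (d i)) →
    (∀ i, Fin (d i) → Bool) → Pd d → ℝ
  | [], _, _, x => f x
  | i :: t, R, η, x =>
      ∫ y, pairHaarL f t R η (Function.update x i y) * haarCube (R i) (η i) y

/-- Tensor Haar function over the parameters of `S`. -/
def haarSub (S : List (Fin m)) (R : ∀ i : {i // i ∈ S}, DyadicCube (d i.1))
    (η : ∀ i : {i // i ∈ S}, Fin (d i.1) → Bool) (x : Pd d) : ℝ :=
  ∏ i : {i // i ∈ S}, haarCube (R i) (η i) (x i.1)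

/-- Tensor of normalized indicators `1_{R i}/|R i|` over the parameters of `S`. -/
def indSub (S : List (Fin m)) (R : ∀ i : {i // i ∈ S}, DyadicCube (d i.1)) (x : Pd d) : ℝ :=
  ∏ i : {i // i ∈ S},
    Set.indicator (R i).carrier (fun _ => (volume (R i).carrier).toReal⁻¹) (x i.1)

/-- `ℝ≥0∞` version of `indSub`. -/
def indSubE (S : List (Fin m)) (R : ∀ i : {i // i ∈ S}, DyadicCube (d i.1)) (x : Pd d) : ℝ≥0∞ :=
  ∏ i : {i // i ∈ S},
    Set.indicator (R i).carrier (fun _ => (volume (R i).carrier)⁻¹) (x i.1)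

/-- The dyadic rectangle determined by a cube in every parameter. -/
def rectCarrier (R : ∀ i, DyadicCube (d i)) : Set (Pd d) := {x | ∀ i, x i ∈ (R i).carrier}

/-- Multi-parameter `A_p` constant over dyadic rectangles. -/
def apConstPd (w : Pd d → ℝ≥0∞) (p : ℝ) : ℝ≥0∞ :=
  ⨆ R : ∀ i, DyadicCube (d i), setAvgE w (rectCarrier R) *
    (setAvgE (fun x => w x ^ (1 - p / (p - 1))) (rectCarrier R)) ^ (p - 1)

end Multi

/-- Multi-parameter `A_p` constant over dyadic rectangles for a two-block product space. -/
def apConst2Pd {m₁ m₂ : ℕ} {d₁ : Fin m₁ → ℕ} {d₂ : Fin m₂ → ℕ}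
    (w : Pd d₁ × Pd d₂ → ℝ≥0∞) (p : ℝ) : ℝ≥0∞ :=
  ⨆ (R₁ : ∀ i, DyadicCube (d₁ i)) (R₂ : ∀ i, DyadicCube (d₂ i)),
    setAvgE w (rectCarrier R₁ ×ˢ rectCarrier R₂) *
      (setAvgE (fun x => w x ^ (1 - p / (p - 1))) (rectCarrier R₁ ×ˢ rectCarrier R₂)) ^ (p - 1)

end

namespace Stmt7Aux
open DyadicCube
variable {n : ℕ}

lemma len_pos (Q : DyadicCube n) : 0 < Q.len := zpow_pos (by norm_num) _

lemma carrier_eq (Q : DyadicCube n) :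
    Q.carrier = Set.pi Set.univ
      (fun i => Set.Ico ((Q.pos i : ℝ) * Q.len) (((Q.pos i : ℝ) + 1) * Q.len)) := by
  ext x; simp [DyadicCube.carrier, Set.mem_pi]

lemma measurableSet_carrier (Q : DyadicCube n) : MeasurableSet Q.carrier := by
  rw [carrier_eq]; exact MeasurableSet.univ_pi fun i => measurableSet_Ico

lemma volume_carrier (Q : DyadicCube n) :
    volume Q.carrier = ENNReal.ofReal Q.len ^ n := by
  rw [carrier_eq, volume_pi_pi]
  have h : ∀ i : Fin n,
      volume (Set.Ico ((Q.pos i : ℝ) * Q.len) (((Q.pos i : ℝ) + 1) * Q.len))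
        = ENNReal.ofReal Q.len := by
    intro i; rw [Real.volume_Ico]; congr 1; ring
  simp [h]

lemma volume_carrier_ne_zero (Q : DyadicCube n) : volume Q.carrier ≠ 0 := by
  rw [volume_carrier]
  exact pow_ne_zero _ (by simp [ENNReal.ofReal_pos, len_pos Q])

lemma volume_carrier_ne_top (Q : DyadicCube n) : volume Q.carrier ≠ ⊤ :=
  (volume_carrier Q) ▸ ENNReal.pow_ne_top ENNReal.ofReal_ne_top

lemma toReal_volume_pos (Q : DyadicCube n) : 0 < (volume Q.carrier).toReal :=
  ENNReal.toReal_pos (volume_carrier_ne_zero Q) (volume_carrier_ne_top Q)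

lemma integrableOn_carrier {f : (Fin n → ℝ) → ℝ} (hf : LocallyIntegrable f)
    (Q : DyadicCube n) : IntegrableOn f Q.carrier := by
  refine (hf.integrableOn_isCompact (k := Set.pi Set.univ
    (fun i => Set.Icc ((Q.pos i : ℝ) * Q.len) (((Q.pos i : ℝ) + 1) * Q.len)))
    (isCompact_univ_pi fun i => isCompact_Icc)).mono_set ?_
  rw [carrier_eq]
  exact Set.pi_mono fun i _ => Set.Ico_subset_Icc_self

lemma carrier_subset {k : ℕ} {I : DyadicCube n} :
    I.carrier ⊆ (ancestor k I).carrier := by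
  intro x hx i
  have L := len_pos I
  have hlen : (2 : ℝ) ^ (-(I.scale - (k : ℤ))) = (2 : ℝ) ^ k * I.len := by
    rw [neg_sub, sub_eq_add_neg, zpow_add₀ (by norm_num : (2:ℝ) ≠ 0), zpow_natCast]
    rfl
  set p := I.pos i with hp
  have h2k : (0 : ℤ) < 2 ^ k := pow_pos (by norm_num) _
  have hfd : Int.fdiv p (2 ^ k) = p / 2 ^ k := Int.fdiv_eq_ediv_of_nonneg _ (le_of_lt h2k)
  have hq1 : p / 2 ^ k * 2 ^ k ≤ p := Int.ediv_mul_le _ (ne_of_gt h2k)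
  have hq2 : p < (p / 2 ^ k + 1) * 2 ^ k := Int.lt_ediv_add_one_mul_self _ h2k
  obtain ⟨hx1, hx2⟩ := hx i
  have hB : (ancestor k I).len = (2:ℝ) ^ k * I.len := by
    show (2:ℝ) ^ (-(I.scale - (k:ℤ))) = _; exact hlen
  have hA : ((ancestor k I).pos i : ℝ) = ((p / 2 ^ k : ℤ) : ℝ) := by
    show ((Int.fdiv (I.pos i) (2 ^ k) : ℤ) : ℝ) = _
    rw [← hp, hfd]
  constructor
  · show ((ancestor k I).pos i : ℝ) * (ancestor k I).len ≤ x i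
    rw [hA, hB, ← mul_assoc]
    refine le_trans (mul_le_mul_of_nonneg_right ?_ (le_of_lt L)) hx1
    exact_mod_cast hq1
  · show x i < (((ancestor k I).pos i : ℝ) + 1) * (ancestor k I).len
    rw [hA, hB, ← mul_assoc]
    refine lt_of_lt_of_le hx2 (mul_le_mul_of_nonneg_right ?_ (le_of_lt L))
    exact_mod_cast hq2

lemma carrier_disjoint {I J : DyadicCube n} (hs : I.scale = J.scale) (hne : I ≠ J) :
    Disjoint I.carrier J.carrier := by
  rw [Set.disjoint_left]
  intro x hxI hxJ
  have hlen : I.len = J.len := by rw [DyadicCube.len, hs]; rfl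
  obtain ⟨i, hi⟩ : ∃ i, I.pos i ≠ J.pos i := by
    by_contra h; push_neg at h
    refine hne ?_
    cases I; cases J
    simp only [DyadicCube.mk.injEq] at hs ⊢
    exact ⟨hs, funext h⟩
  have L := len_pos J
  obtain ⟨h1, h2⟩ := hxI i
  obtain ⟨h3, h4⟩ := hxJ i
  rw [hlen] at h1 h2
  have a1 : (I.pos i : ℝ) < (J.pos i : ℝ) + 1 :=
    lt_of_mul_lt_mul_right (lt_of_le_of_lt h1 h4) (le_of_lt L)
  have a2 : (J.pos i : ℝ) < (I.pos i : ℝ) + 1 :=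
    lt_of_mul_lt_mul_right (lt_of_le_of_lt h3 h2) (le_of_lt L)
  have b1 : I.pos i < J.pos i + 1 := by exact_mod_cast a1
  have b2 : J.pos i < I.pos i + 1 := by exact_mod_cast a2
  omega

lemma ancestor_scale {k : ℕ} {I K : DyadicCube n} (h : ancestor k I = K) :
    I.scale = K.scale + k := by
  have : (ancestor k I).scale = K.scale := by rw [h]
  simp only [DyadicCube.ancestor] at this
  omega

lemma pi_aestronglyMeasurable {X : Type*} [MeasurableSpace X] {μ : Measure X}
    {ι : Type} [Fintype ι] (f : X → ι → ℝ)
    (h : ∀ i, AEMeasurable (fun x => f x i) μ) : AEStronglyMeasurable f μ := by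
  have : AEMeasurable f μ := by
    refine ⟨fun x i => (h i).mk _ x, measurable_pi_iff.2 fun i => (h i).measurable_mk, ?_⟩
    filter_upwards [ae_all_iff.2 fun i => (h i).ae_eq_mk] with x hx
    funext i; exact hx i
  exact this.aestronglyMeasurable

section Analytic
variable {ι : Type} [Fintype ι]

lemma sqrt_sum_sq_le_sum_abs (a : ι → ℝ) :
    Real.sqrt (∑ i, (a i) ^ 2) ≤ ∑ i, |a i| := by
  rw [show (∑ i, (a i) ^ 2) = ∑ i, |a i| ^ 2 by simp [sq_abs]]
  refine le_trans (Real.sqrt_le_sqrt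
    (Finset.sum_sq_le_sq_sum_of_nonneg fun i _ => abs_nonneg _)) ?_
  rw [Real.sqrt_sq (Finset.sum_nonneg fun i _ => abs_nonneg _)]

lemma key (φ : ι → (Fin n → ℝ) → ℝ) (hl : ∀ i, LocallyIntegrable (φ i))
    (Q : DyadicCube n) :
    Real.sqrt (∑ i, (∫ x in Q.carrier, φ i x) ^ 2)
      ≤ ∫ x in Q.carrier, Real.sqrt (∑ i, (φ i x) ^ 2) := by
  classical
  set μ := volume.restrict Q.carrier
  set Fpi : (Fin n → ℝ) → (ι → ℝ) := fun x i => φ i x with hFpi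
  set L := (PiLp.continuousLinearEquiv 2 ℝ (fun _ : ι => ℝ)).symm
  set F : (Fin n → ℝ) → EuclideanSpace ℝ ι := fun x => L (Fpi x) with hF
  have hFxi : ∀ x i, F x i = φ i x := fun x i => rfl
  have hmeas : AEStronglyMeasurable F μ := by
    refine (L.continuous.comp_aestronglyMeasurable ?_)
    exact pi_aestronglyMeasurable Fpi fun i =>
      ((hl i).aestronglyMeasurable.aemeasurable).restrict
  have hnormF : ∀ x, ‖F x‖ = Real.sqrt (∑ i, (φ i x) ^ 2) := by
    intro x
    rw [EuclideanSpace.norm_eq]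
    congr 1
    exact Finset.sum_congr rfl fun i _ => by rw [hFxi, Real.norm_eq_abs, sq_abs]
  have hg : Integrable (fun x => ∑ i, |φ i x|) μ :=
    integrable_finset_sum _ fun i _ => (integrableOn_carrier (hl i) Q).abs
  have hFi : Integrable F μ := by
    refine hg.mono' hmeas (Filter.Eventually.of_forall fun x => ?_)
    rw [hnormF]
    simpa using sqrt_sum_sq_le_sum_abs (fun i => φ i x)
  have hcoord : ∀ i, (∫ x, F x ∂μ) i = ∫ x, φ i x ∂μ := by
    intro i
    have := (EuclideanSpace.proj (𝕜 := ℝ) i).integral_comp_comm hFi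
    simpa [hFxi] using this.symm
  calc Real.sqrt (∑ i, (∫ x in Q.carrier, φ i x) ^ 2)
      = ‖∫ x, F x ∂μ‖ := by
        rw [EuclideanSpace.norm_eq]
        congr 1
        exact Finset.sum_congr rfl fun i _ => by
          rw [hcoord, Real.norm_eq_abs, sq_abs]
    _ ≤ ∫ x, ‖F x‖ ∂μ := norm_integral_le_integral_norm _
    _ = ∫ x in Q.carrier, Real.sqrt (∑ i, (φ i x) ^ 2) := by
        exact integral_congr_ae (Filter.Eventually.of_forall fun x => hnormF x)

lemma integrableOn_sqrtsum (φ : ι → (Fin n → ℝ) → ℝ)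
    (hl : ∀ i, LocallyIntegrable (φ i)) (Q : DyadicCube n) :
    IntegrableOn (fun x => Real.sqrt (∑ i, (φ i x) ^ 2)) Q.carrier := by
  classical
  have hg : Integrable (fun x => ∑ i, |φ i x|) (volume.restrict Q.carrier) :=
    integrable_finset_sum _ fun i _ => (integrableOn_carrier (hl i) Q).abs
  refine hg.mono' ?_ (Filter.Eventually.of_forall fun x => ?_)
  · refine Real.continuous_sqrt.comp_aestronglyMeasurable ?_
    refine Finset.aestronglyMeasurable_fun_sum _ fun i _ => ?_
    exact ((hl i).aestronglyMeasurable.restrict).pow 2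
  · rw [Real.norm_eq_abs, abs_of_nonneg (Real.sqrt_nonneg _)]
    exact sqrt_sum_sq_le_sum_abs (fun i => φ i x)

end Analytic
end Stmt7Aux

open Stmt7Aux in
/-- Kahane–Khintchine averaging estimate: there is an absolute
constant `C` such that
`Σ_{I^{(k)}=K} |K|⁻¹ (Σ_i |I|² ⟨φ_i⟩_I²)^{1/2} ≤ C ⟨(Σ_i φ_i²)^{1/2}⟩_K`. -/
theorem stmt7 :
    ∃ C : ℝ, 0 < C ∧
      ∀ (n : ℕ) (ι : Type) [Fintype ι] (K : DyadicCube n) (k : ℕ)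
        (φ : ι → (Fin n → ℝ) → ℝ),
        (∀ i, MeasureTheory.LocallyIntegrable (φ i)) →
        (∀ i x, 0 ≤ φ i x) →
        (∑' I : {I : DyadicCube n // DyadicCube.ancestor k I = K},
            (volume K.carrier).toReal⁻¹ *
              Real.sqrt (∑ i, ((volume I.1.carrier).toReal * cubeAvg (φ i) I.1) ^ 2))
          ≤ C * cubeAvg (fun x => Real.sqrt (∑ i, (φ i x) ^ 2)) K := by
  classical
  refine ⟨1, one_pos, fun n ι _ K k φ hloc _ => ?_⟩
  set g : (Fin n → ℝ) → ℝ := fun x => Real.sqrt (∑ i, (φ i x) ^ 2) with hg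
  have hgK : IntegrableOn g K.carrier := integrableOn_sqrtsum φ hloc K
  have hvK : (0:ℝ) ≤ (volume K.carrier).toReal⁻¹ :=
    inv_nonneg.2 ENNReal.toReal_nonneg
  have hRHS0 : 0 ≤ 1 * cubeAvg g K := by
    rw [one_mul, cubeAvg]
    exact mul_nonneg hvK (integral_nonneg fun x => Real.sqrt_nonneg _)
  refine tsum_le_of_sum_le' hRHS0 fun s => ?_
  -- termwise bound
  have hterm : ∀ I : {I : DyadicCube n // DyadicCube.ancestor k I = K},
      Real.sqrt (∑ i, ((volume I.1.carrier).toReal * cubeAvg (φ i) I.1) ^ 2)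
        ≤ ∫ x in I.1.carrier, g x := by
    intro I
    have hclear : ∀ i, (volume I.1.carrier).toReal * cubeAvg (φ i) I.1
        = ∫ x in I.1.carrier, φ i x := by
      intro i
      rw [cubeAvg, ← mul_assoc, mul_inv_cancel₀ (ne_of_gt (toReal_volume_pos I.1)),
        one_mul]
    calc Real.sqrt (∑ i, ((volume I.1.carrier).toReal * cubeAvg (φ i) I.1) ^ 2)
        = Real.sqrt (∑ i, (∫ x in I.1.carrier, φ i x) ^ 2) := by
          congr 1; exact Finset.sum_congr rfl fun i _ => by rw [hclear]
      _ ≤ ∫ x in I.1.carrier, g x := key φ hloc I.1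
  have hsum : ∑ I ∈ s, ∫ x in I.1.carrier, g x ≤ ∫ x in K.carrier, g x := by
    rw [← integral_biUnion_finset s (fun I _ => measurableSet_carrier I.1)
      (fun I _ J _ hIJ => carrier_disjoint
        (by rw [ancestor_scale I.2, ancestor_scale J.2])
        (fun h => hIJ (Subtype.ext h)))
      (fun I _ => integrableOn_sqrtsum φ hloc I.1)]
    refine setIntegral_mono_set hgK
      (Filter.Eventually.of_forall fun x => Real.sqrt_nonneg _) ?_
    refine (Set.iUnion₂_subset fun I _ => ?_).eventuallyLE
    have h := carrier_subset (k := k) (I := I.1)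
    rwa [I.2] at h
  calc ∑ I ∈ s, (volume K.carrier).toReal⁻¹ *
        Real.sqrt (∑ i, ((volume I.1.carrier).toReal * cubeAvg (φ i) I.1) ^ 2)
      = (volume K.carrier).toReal⁻¹ * ∑ I ∈ s,
          Real.sqrt (∑ i, ((volume I.1.carrier).toReal * cubeAvg (φ i) I.1) ^ 2) := by
        rw [Finset.mul_sum]
    _ ≤ (volume K.carrier).toReal⁻¹ * ∫ x in K.carrier, g x := by
        refine mul_le_mul_of_nonneg_left ?_ hvK
        exact le_trans (Finset.sum_le_sum fun I _ => hterm I) hsum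
    _ = 1 * cubeAvg g K := by rw [one_mul, cubeAvg]
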